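/- arXiv:1310.0865 — 4 statements merged into one kernel-verified Lean document; each statement's English description precedes it below -/
import Mathlib

section
/- For any matrix P ∈ ℝ^{N×T} with rank R, the square root of its nuclear norm equals the minimum of (1/2)(‖F‖_F + ‖G‖_F) over all factorizations P = F Gᵀ with F ∈ ℝ^{N×R}, G ∈ ℝ^{T×R}. -/
open Matrix

noncomputable def frob {m n : Type*} [Fintype m] [Fintype n] (M : Matrix m n ℝ) : ℝ :=
  Real.sqrt (∑ i, ∑ j, (M i j) ^ 2)

theorem Matrix.isHermitian_transpose_mul_self {m n α : Type*} [Fintype m] [CommSemiring α]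
    [StarRing α] [TrivialStar α] (A : Matrix m n α) : (Aᵀ * A).IsHermitian := by
  rw [IsHermitian, conjTranspose_eq_transpose_of_trivial, transpose_mul, transpose_transpose]

noncomputable def nuclearNorm {N T : ℕ} (P : Matrix (Fin N) (Fin T) ℝ) : ℝ :=
  ∑ i, Real.sqrt ((Matrix.isHermitian_transpose_mul_self P).eigenvalues i)

namespace Aux

open Finset RealInnerProductSpace

variable {N T : ℕ} (P : Matrix (Fin N) (Fin T) ℝ)

local notation "hA" => Matrix.isHermitian_transpose_mul_self P

noncomputable def vv (j : Fin T) : Fin T → ℝ := ⇑((hA).eigenvectorBasis j)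

lemma dot_v (i j : Fin T) : vv P i ⬝ᵥ vv P j = if i = j then 1 else 0 := by
  have h2 := orthonormal_iff_ite.mp (hA).eigenvectorBasis.orthonormal i j
  rw [EuclideanSpace.inner_eq_star_dotProduct, star_trivial, dotProduct_comm] at h2
  exact h2

lemma dot_Pv (x y : Fin T → ℝ) :
    (P *ᵥ x) ⬝ᵥ (P *ᵥ y) = x ⬝ᵥ ((Pᴴ * P) *ᵥ y) := by
  rw [conjTranspose_eq_transpose_of_trivial, ← mulVec_mulVec, dotProduct_mulVec x,
    vecMul_transpose]

lemma dot_Pv_v (x : Fin T → ℝ) (j : Fin T) :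
    (P *ᵥ x) ⬝ᵥ (P *ᵥ vv P j) = (hA).eigenvalues j * (x ⬝ᵥ vv P j) := by
  rw [dot_Pv, vv, conjTranspose_eq_transpose_of_trivial, (hA).mulVec_eigenvectorBasis, dotProduct_smul, smul_eq_mul]

lemma mu_nonneg (i : Fin T) : 0 ≤ (hA).eigenvalues i :=
  (posSemidef_conjTranspose_mul_self P).eigenvalues_nonneg i

lemma Pv_self (i : Fin T) : (P *ᵥ vv P i) ⬝ᵥ (P *ᵥ vv P i) = (hA).eigenvalues i := by
  rw [dot_Pv_v, dot_v]
  simp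

lemma Pv_zero (i : Fin T) (h : (hA).eigenvalues i = 0) : P *ᵥ vv P i = 0 := by
  have := Pv_self P i
  rw [h, dotProduct_self_eq_zero] at this
  exact this

lemma parseval (w : Fin T → ℝ) : ∑ i, (vv P i ⬝ᵥ w) ^ 2 = w ⬝ᵥ w := by
  have h := (hA).eigenvectorBasis.sum_inner_mul_inner
    ((WithLp.equiv 2 _).symm w) ((WithLp.equiv 2 _).symm w)
  have h2 : ∀ i, ⟪((WithLp.equiv 2 ((i : Fin T) → (fun _ => ℝ) i)).symm w),
      (hA).eigenvectorBasis i⟫ = w ⬝ᵥ vv P i := fun i => by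
    rw [EuclideanSpace.inner_eq_star_dotProduct, star_trivial, dotProduct_comm]; rfl
  have h3 : ∀ i, ⟪(hA).eigenvectorBasis i,
      ((WithLp.equiv 2 ((i : Fin T) → (fun _ => ℝ) i)).symm w)⟫ = vv P i ⬝ᵥ w := fun i => by
    rw [EuclideanSpace.inner_eq_star_dotProduct, star_trivial, dotProduct_comm]; rfl
  calc ∑ i, (vv P i ⬝ᵥ w) ^ 2 = ∑ i, (w ⬝ᵥ vv P i) * (vv P i ⬝ᵥ w) := by
        refine Finset.sum_congr rfl fun i _ => ?_
        rw [sq, dotProduct_comm]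
      _ = w ⬝ᵥ w := by
        refine Eq.trans (Finset.sum_congr rfl fun i _ => by rw [← h2, ← h3]) (h.trans ?_)
        rfl

lemma expand_entry (a : Fin N) (b : Fin T) :
    P a b = ∑ i, (P *ᵥ vv P i) a * vv P i b := by
  classical
  set w : Fin T → ℝ := fun c => P a c with hwdef
  have h := (hA).eigenvectorBasis.sum_inner_mul_inner
    ((WithLp.equiv 2 _).symm w) ((WithLp.equiv 2 _).symm (Pi.single b 1))
  have h2 : ∀ i, ⟪((WithLp.equiv 2 ((i : Fin T) → (fun _ => ℝ) i)).symm w),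
      (hA).eigenvectorBasis i⟫ = (P *ᵥ vv P i) a := fun i => by
    rw [EuclideanSpace.inner_eq_star_dotProduct, star_trivial, dotProduct_comm]; rfl
  have h3 : ∀ i, ⟪(hA).eigenvectorBasis i,
      ((WithLp.equiv 2 ((i : Fin T) → (fun _ => ℝ) i)).symm (Pi.single b 1))⟫
        = vv P i b := fun i => by
    rw [EuclideanSpace.inner_eq_star_dotProduct, star_trivial, dotProduct_comm]
    show vv P i ⬝ᵥ Pi.single b 1 = vv P i b
    rw [dotProduct_single, mul_one]
  have h4 : ⟪((WithLp.equiv 2 ((i : Fin T) → (fun _ => ℝ) i)).symm w),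
      ((WithLp.equiv 2 ((i : Fin T) → (fun _ => ℝ) i)).symm (Pi.single b 1))⟫ = P a b := by
    rw [EuclideanSpace.inner_eq_star_dotProduct, star_trivial, dotProduct_comm]
    show w ⬝ᵥ Pi.single b 1 = P a b
    rw [dotProduct_single, mul_one]
  rw [← h4, ← h]
  exact Finset.sum_congr rfl fun i _ => by rw [h2, h3]

lemma rank_eq : P.rank = Fintype.card {i // (hA).eigenvalues i ≠ 0} := by
  rw [← rank_conjTranspose_mul_self]
  exact (hA).rank_eq_card_non_zero_eigs

lemma sum_sqrt_eig_subtype :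
    ∑ j : {i // (hA).eigenvalues i ≠ 0}, Real.sqrt ((hA).eigenvalues j) = nuclearNorm P := by
  rw [nuclearNorm]
  rw [← Finset.sum_filter_add_sum_filter_not Finset.univ (fun i => (hA).eigenvalues i ≠ 0)
    (fun i => Real.sqrt ((hA).eigenvalues i))]
  rw [← Finset.sum_subtype (Finset.filter (fun i => (hA).eigenvalues i ≠ 0) Finset.univ)
    (fun i => by simp) (fun i => Real.sqrt ((hA).eigenvalues i))]
  have : ∑ i ∈ Finset.filter (fun i => ¬(hA).eigenvalues i ≠ 0) Finset.univ,
      Real.sqrt ((hA).eigenvalues i) = 0 := by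
    refine Finset.sum_eq_zero fun i hi => ?_
    simp only [Finset.mem_filter, not_not] at hi
    rw [hi.2, Real.sqrt_zero]
  rw [this, add_zero]

lemma membership : ∃ (F : Matrix (Fin N) (Fin P.rank) ℝ) (G : Matrix (Fin T) (Fin P.rank) ℝ),
    P = F * Gᵀ ∧ Real.sqrt (nuclearNorm P) = (1 / 2) *
      ((Real.sqrt (∑ a, ∑ k, (F a k) ^ 2)) + Real.sqrt (∑ b, ∑ k, (G b k) ^ 2)) := by
  classical
  have hcard : Fintype.card (Fin P.rank) = Fintype.card {i // (hA).eigenvalues i ≠ 0} := by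
    rw [Fintype.card_fin, rank_eq]
  let e : Fin P.rank ≃ {i // (hA).eigenvalues i ≠ 0} := Fintype.equivOfCardEq hcard
  set μ : Fin T → ℝ := (hA).eigenvalues with hμdef
  have hq : ∀ i : {i // μ i ≠ 0}, Real.sqrt (Real.sqrt (μ i)) ≠ 0 := fun i => by
    have h1 : 0 < μ i := lt_of_le_of_ne (mu_nonneg P i) (Ne.symm i.2)
    positivity
  refine ⟨fun a k => (P *ᵥ vv P (e k)) a / Real.sqrt (Real.sqrt (μ (e k))),
    fun b k => Real.sqrt (Real.sqrt (μ (e k))) * vv P (e k) b, ?_, ?_⟩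
  · ext a b
    erw [Matrix.mul_apply]
    show P a b = ∑ k, (P *ᵥ vv P (e k)) a / Real.sqrt (Real.sqrt (μ (e k))) *
      (Real.sqrt (Real.sqrt (μ (e k))) * vv P (e k) b)
    have hterm : ∀ k : Fin P.rank,
        (P *ᵥ vv P (e k)) a / Real.sqrt (Real.sqrt (μ (e k))) *
          (Real.sqrt (Real.sqrt (μ (e k))) * vv P (e k) b)
        = (P *ᵥ vv P (e k)) a * vv P (e k) b := fun k => by
      rw [div_mul_eq_mul_div, mul_comm (Real.sqrt (Real.sqrt (μ (e k)))) (vv P (e k) b),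
        ← mul_assoc, mul_div_assoc, div_self (hq (e k)), mul_one]
    rw [Finset.sum_congr rfl fun k _ => hterm k]
    rw [Equiv.sum_comp e (fun j : {i // μ i ≠ 0} => (P *ᵥ vv P j) a * vv P j b)]
    rw [expand_entry P a b,
      ← Finset.sum_filter_add_sum_filter_not Finset.univ (fun i => μ i ≠ 0)
        (fun i => (P *ᵥ vv P i) a * vv P i b),
      ← Finset.sum_subtype (Finset.filter (fun i => μ i ≠ 0) Finset.univ)
        (fun i => by simp) (fun i => (P *ᵥ vv P i) a * vv P i b)]
    have hz : ∑ i ∈ Finset.filter (fun i => ¬μ i ≠ 0) Finset.univ,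
        (P *ᵥ vv P i) a * vv P i b = 0 := by
      refine Finset.sum_eq_zero fun i hi => ?_
      simp only [Finset.mem_filter, not_not] at hi
      rw [Pv_zero P i hi.2]
      simp
    rw [hz, add_zero]
  · have hsum_q : ∀ k : Fin P.rank, Real.sqrt (Real.sqrt (μ (e k))) ^ 2 = Real.sqrt (μ (e k)) :=
      fun k => Real.sq_sqrt (Real.sqrt_nonneg _)
    have hcol : ∀ k : Fin P.rank, ∑ a, ((P *ᵥ vv P (e k)) a) ^ 2 = μ (e k) := fun k => by
      simp only [hμdef]
      rw [← Pv_self P (e k)]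
      simp [dotProduct, sq]
    have hFsum : ∑ a, ∑ k : Fin P.rank,
        ((P *ᵥ vv P (e k)) a / Real.sqrt (Real.sqrt (μ (e k)))) ^ 2 = nuclearNorm P := by
      rw [Finset.sum_comm]
      have hstep : ∀ k : Fin P.rank,
          ∑ a, ((P *ᵥ vv P (e k)) a / Real.sqrt (Real.sqrt (μ (e k)))) ^ 2
            = Real.sqrt (μ (e k)) := by
        intro k
        simp only [div_pow, hsum_q k]
        rw [← Finset.sum_div, hcol k, Real.div_sqrt]
      rw [Finset.sum_congr rfl fun k _ => hstep k,
        Equiv.sum_comp e (fun j : {i // μ i ≠ 0} => Real.sqrt (μ j)),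
        sum_sqrt_eig_subtype]
    have hGsum : ∑ b, ∑ k : Fin P.rank,
        (Real.sqrt (Real.sqrt (μ (e k))) * vv P (e k) b) ^ 2 = nuclearNorm P := by
      rw [Finset.sum_comm]
      have hstep : ∀ k : Fin P.rank,
          ∑ b, (Real.sqrt (Real.sqrt (μ (e k))) * vv P (e k) b) ^ 2
            = Real.sqrt (μ (e k)) := by
        intro k
        simp only [mul_pow, hsum_q k, ← Finset.mul_sum]
        have : ∑ b, vv P (e k) b ^ 2 = 1 := by
          have h1 : vv P (e k) ⬝ᵥ vv P (e k) = 1 := by rw [dot_v]; simp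
          rw [← h1]
          simp [dotProduct, sq]
        rw [this, mul_one]
      rw [Finset.sum_congr rfl fun k _ => hstep k,
        Equiv.sum_comp e (fun j : {i // μ i ≠ 0} => Real.sqrt (μ j)),
        sum_sqrt_eig_subtype]
    rw [hFsum, hGsum]
    ring

lemma nuclear_le {K : Type*} [Fintype K] (F : Matrix (Fin N) K ℝ) (G : Matrix (Fin T) K ℝ)
    (hPFG : P = F * Gᵀ) :
    nuclearNorm P ≤ Real.sqrt (∑ a, ∑ k, F a k ^ 2) * Real.sqrt (∑ b, ∑ k, G b k ^ 2) := by
  classical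
  set μ : Fin T → ℝ := (hA).eigenvalues with hμdef
  set S : Finset (Fin T) := Finset.filter (fun i => μ i ≠ 0) Finset.univ with hSdef
  set u : Fin T → (Fin N → ℝ) := fun i => (Real.sqrt (μ i))⁻¹ • (P *ᵥ vv P i) with hudef
  set av : Fin T → ℝ := fun i => Real.sqrt (∑ k, ((Fᵀ *ᵥ u i) k) ^ 2) with havdef
  set bv : Fin T → ℝ := fun i => Real.sqrt (∑ k, ((Gᵀ *ᵥ vv P i) k) ^ 2) with hbvdef
  -- step 0 : nuclearNorm P = ∑ i in S, √(μ i)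
  have step0 : nuclearNorm P = ∑ i ∈ S, Real.sqrt (μ i) := by
    rw [nuclearNorm, ← Finset.sum_filter_add_sum_filter_not Finset.univ (fun i => μ i ≠ 0)
      (fun i => Real.sqrt (μ i))]
    have hz : ∑ i ∈ Finset.filter (fun i => ¬μ i ≠ 0) Finset.univ, Real.sqrt (μ i) = 0 := by
      refine Finset.sum_eq_zero fun i hi => ?_
      simp only [Finset.mem_filter, not_not] at hi
      rw [hi.2, Real.sqrt_zero]
    rw [hz, add_zero]
  -- step 1 : pointwise bound on S
  have step1 : ∀ i ∈ S, Real.sqrt (μ i) ≤ av i * bv i := by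
    intro i hi
    have hμne : μ i ≠ 0 := (Finset.mem_filter.mp hi).2
    have hseq : u i ⬝ᵥ (P *ᵥ vv P i) = Real.sqrt (μ i) := by
      rw [hudef]
      simp only [smul_dotProduct, smul_eq_mul]
      rw [Pv_self P i, inv_mul_eq_div, hμdef, Real.div_sqrt]
    have hfac : u i ⬝ᵥ (P *ᵥ vv P i) = (Fᵀ *ᵥ u i) ⬝ᵥ (Gᵀ *ᵥ vv P i) := by
      rw [hPFG, ← mulVec_mulVec, dotProduct_mulVec]
      simp only [mulVec_transpose]
    have hCS : (Fᵀ *ᵥ u i) ⬝ᵥ (Gᵀ *ᵥ vv P i) ≤ av i * bv i := by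
      rw [havdef, hbvdef]
      exact Real.sum_mul_le_sqrt_mul_sqrt Finset.univ _ _
    rw [← hseq, hfac]
    exact hCS
  -- step 2 : Cauchy-Schwarz over S
  have step2 : ∑ i ∈ S, av i * bv i ≤
      Real.sqrt (∑ i ∈ S, ∑ k, ((Fᵀ *ᵥ u i) k) ^ 2) *
        Real.sqrt (∑ i ∈ S, ∑ k, ((Gᵀ *ᵥ vv P i) k) ^ 2) := by
    have h := Real.sum_mul_le_sqrt_mul_sqrt S av bv
    have ha2 : ∀ i, av i ^ 2 = ∑ k, ((Fᵀ *ᵥ u i) k) ^ 2 := fun i =>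
      Real.sq_sqrt (Finset.sum_nonneg fun k _ => sq_nonneg _)
    have hb2 : ∀ i, bv i ^ 2 = ∑ k, ((Gᵀ *ᵥ vv P i) k) ^ 2 := fun i =>
      Real.sq_sqrt (Finset.sum_nonneg fun k _ => sq_nonneg _)
    simpa only [ha2, hb2] using h
  -- step 3 : G-side (Parseval)
  have step3 : ∑ i ∈ S, ∑ k, ((Gᵀ *ᵥ vv P i) k) ^ 2 ≤ ∑ b, ∑ k, G b k ^ 2 := by
    have hsub : ∑ i ∈ S, ∑ k, ((Gᵀ *ᵥ vv P i) k) ^ 2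
        ≤ ∑ i, ∑ k, ((Gᵀ *ᵥ vv P i) k) ^ 2 :=
      Finset.sum_le_sum_of_subset_of_nonneg (Finset.subset_univ S)
        (fun i _ _ => Finset.sum_nonneg fun k _ => sq_nonneg _)
    refine hsub.trans ?_
    rw [Finset.sum_comm]
    have hktot : ∀ k, ∑ i, ((Gᵀ *ᵥ vv P i) k) ^ 2 = ∑ b, G b k ^ 2 := by
      intro k
      have h1 : ∀ i, (Gᵀ *ᵥ vv P i) k = vv P i ⬝ᵥ (fun b => G b k) := by
        intro i
        simp [mulVec, dotProduct, transpose_apply, mul_comm]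
      rw [Finset.sum_congr rfl fun i _ => by rw [h1 i]]
      rw [parseval P (fun b => G b k)]
      simp [dotProduct, sq]
    rw [Finset.sum_congr rfl fun k _ => hktot k, Finset.sum_comm]
  -- step 4 : F-side (Bessel)
  have step4 : ∑ i ∈ S, ∑ k, ((Fᵀ *ᵥ u i) k) ^ 2 ≤ ∑ a, ∑ k, F a k ^ 2 := by
    rw [Finset.sum_comm, Finset.sum_comm (γ := Fin N)]
    refine Finset.sum_le_sum fun k _ => ?_
    -- orthonormal family
    set U : {i // μ i ≠ 0} → EuclideanSpace ℝ (Fin N) :=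
      fun i => (WithLp.equiv 2 _).symm (u i) with hUdef
    have honU : Orthonormal ℝ U := by
      rw [orthonormal_iff_ite]
      intro i j
      have hinner : ⟪U i, U j⟫ = u i ⬝ᵥ u j := by
        rw [EuclideanSpace.inner_eq_star_dotProduct, star_trivial, dotProduct_comm]; rfl
      rw [hinner, hudef]
      simp only [smul_dotProduct, dotProduct_smul, smul_eq_mul]
      rw [dot_Pv_v P _ j, dot_v P i j]
      rcases eq_or_ne i j with h | h
      · have hii : (i : Fin T) = (j : Fin T) := by rw [h]
        have hpos : 0 < μ (j : Fin T) := lt_of_le_of_ne (mu_nonneg P _) (Ne.symm j.2)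
        rw [if_pos h, if_pos hii, hii]
        have hs : Real.sqrt (μ (j : Fin T)) ^ 2 = μ (j : Fin T) :=
          Real.sq_sqrt hpos.le
        have hsne : Real.sqrt (μ (j : Fin T)) ≠ 0 := by positivity
        field_simp <;> nlinarith [hs]
      · have hii : (i : Fin T) ≠ (j : Fin T) := fun hc => h (Subtype.ext hc)
        rw [if_neg h, if_neg hii]
        ring
    have hbessel := honU.sum_inner_products_le
      ((WithLp.equiv 2 _).symm (fun a => F a k) : EuclideanSpace ℝ (Fin N)) (s := Finset.univ)
    have hinner2 : ∀ i : {i // μ i ≠ 0},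
        ⟪U i, ((WithLp.equiv 2 _).symm (fun a => F a k) : EuclideanSpace ℝ (Fin N))⟫
          = u i ⬝ᵥ (fun a => F a k) := fun i => by
      rw [EuclideanSpace.inner_eq_star_dotProduct, star_trivial, dotProduct_comm]; rfl
    have hnorm : ‖((WithLp.equiv 2 _).symm (fun a => F a k) : EuclideanSpace ℝ (Fin N))‖ ^ 2
        = ∑ a, F a k ^ 2 := by
      rw [EuclideanSpace.norm_eq, Real.sq_sqrt (Finset.sum_nonneg fun a _ => sq_nonneg _)]
      refine Finset.sum_congr rfl fun a _ => ?_
      rw [Real.norm_eq_abs, sq_abs]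
      rfl
    have hsub2 : ∑ i : {i // μ i ≠ 0}, ‖⟪U i,
          ((WithLp.equiv 2 _).symm (fun a => F a k) : EuclideanSpace ℝ (Fin N))⟫‖ ^ 2
        = ∑ i : {i // μ i ≠ 0}, ((Fᵀ *ᵥ u i) k) ^ 2 := by
      refine Finset.sum_congr rfl fun i _ => ?_
      rw [hinner2 i, Real.norm_eq_abs, sq_abs]
      congr 1
      simp [mulVec, dotProduct, transpose_apply, mul_comm]
    have hLHS : ∑ i ∈ S, ((Fᵀ *ᵥ u i) k) ^ 2
        = ∑ i : {i // μ i ≠ 0}, ((Fᵀ *ᵥ u (i : Fin T)) k) ^ 2 :=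
      Finset.sum_subtype (p := fun i => μ i ≠ 0) S (fun i => by simp [hSdef])
        (fun i => ((Fᵀ *ᵥ u i) k) ^ 2)
    rw [hLHS, ← hsub2, ← hnorm]
    exact hbessel
  -- combine
  rw [step0]
  calc ∑ i ∈ S, Real.sqrt (μ i) ≤ ∑ i ∈ S, av i * bv i := Finset.sum_le_sum step1
    _ ≤ Real.sqrt (∑ i ∈ S, ∑ k, ((Fᵀ *ᵥ u i) k) ^ 2) *
        Real.sqrt (∑ i ∈ S, ∑ k, ((Gᵀ *ᵥ vv P i) k) ^ 2) := step2
    _ ≤ Real.sqrt (∑ a, ∑ k, F a k ^ 2) * Real.sqrt (∑ b, ∑ k, G b k ^ 2) := by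
        apply mul_le_mul (Real.sqrt_le_sqrt step4) (Real.sqrt_le_sqrt step3)
          (Real.sqrt_nonneg _) (Real.sqrt_nonneg _)

end Aux

open Aux

/-- The square root of the nuclear norm of `P` is the minimum of
`(1/2) (‖F‖_F + ‖G‖_F)` over all factorizations `P = F * Gᵀ` with rank-many columns. -/
theorem sqrt_nuclearNorm_eq_min_factorization {N T : ℕ} (P : Matrix (Fin N) (Fin T) ℝ) :
    IsLeast {c : ℝ | ∃ (F : Matrix (Fin N) (Fin P.rank) ℝ) (G : Matrix (Fin T) (Fin P.rank) ℝ),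
        P = F * Gᵀ ∧ c = (1 / 2) * (frob F + frob G)}
      (Real.sqrt (nuclearNorm P)) := by
  constructor
  · obtain ⟨F, G, hFG, heq⟩ := membership P
    exact ⟨F, G, hFG, by rw [heq]; rfl⟩
  · rintro c ⟨F, G, hFG, hc⟩
    have hx : (0:ℝ) ≤ frob F := Real.sqrt_nonneg _
    have hy : (0:ℝ) ≤ frob G := Real.sqrt_nonneg _
    have hnn : nuclearNorm P ≤ frob F * frob G := nuclear_le P F G hFG
    have h1 : Real.sqrt (nuclearNorm P) ≤ Real.sqrt (frob F * frob G) :=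
      Real.sqrt_le_sqrt hnn
    have h2 : Real.sqrt (frob F * frob G) ≤ (frob F + frob G) / 2 := by
      rw [show (frob F + frob G)/2 = Real.sqrt (((frob F + frob G)/2)^2) from
        (Real.sqrt_sq (by positivity)).symm]
      exact Real.sqrt_le_sqrt (by nlinarith [sq_nonneg (frob F - frob G)])
    rw [hc]
    linarith
end

section
/- Let y ∈ ℝ^n, X ∈ ℝ^{n×p}, μ > 0, and consider minimizing f(θ) = ‖y − Xθ‖₂² + μ‖θ‖₂ over θ ∈ ℝ^p. If ‖Xᵀy‖₂ ≤ μ/2, then θ = 0 is a global minimizer. -/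
open Matrix

/-- Euclidean norm of a finite real vector. -/
noncomputable def euclidNorm {ι : Type*} [Fintype ι] (v : ι → ℝ) : ℝ :=
  Real.sqrt (∑ i, (v i) ^ 2)

lemma euclidNorm_nonneg {ι : Type*} [Fintype ι] (v : ι → ℝ) : 0 ≤ euclidNorm v :=
  Real.sqrt_nonneg _

lemma euclidNorm_sq {ι : Type*} [Fintype ι] (v : ι → ℝ) : euclidNorm v ^ 2 = ∑ i, (v i) ^ 2 :=
  Real.sq_sqrt (Finset.sum_nonneg fun i _ => sq_nonneg _)

lemma sum_mul_le_euclidNorm_mul_euclidNorm {ι : Type*} [Fintype ι] (f g : ι → ℝ) :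
    ∑ i, f i * g i ≤ euclidNorm f * euclidNorm g := by
  calc ∑ i, f i * g i ≤ |∑ i, f i * g i| := le_abs_self _
    _ = Real.sqrt ((∑ i, f i * g i) ^ 2) := (Real.sqrt_sq_eq_abs _).symm
    _ ≤ Real.sqrt ((∑ i, f i ^ 2) * ∑ i, g i ^ 2) :=
        Real.sqrt_le_sqrt (Finset.sum_mul_sq_le_sq_mul_sq _ _ _)
    _ = euclidNorm f * euclidNorm g :=
        Real.sqrt_mul (Finset.sum_nonneg fun i _ => sq_nonneg _) _

/-- If `‖Xᵀy‖₂ ≤ μ/2` then `θ = 0` globally minimizes `‖y - Xθ‖₂² + μ‖θ‖₂`. -/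
theorem zero_minimizes_of_small_correlation {n p : ℕ} (y : Fin n → ℝ)
    (X : Matrix (Fin n) (Fin p) ℝ) (μ : ℝ) (hμ : 0 < μ)
    (h : euclidNorm (Xᵀ.mulVec y) ≤ μ / 2) :
    ∀ θ : Fin p → ℝ,
      euclidNorm (y - X.mulVec (0 : Fin p → ℝ)) ^ 2 + μ * euclidNorm (0 : Fin p → ℝ) ≤
        euclidNorm (y - X.mulVec θ) ^ 2 + μ * euclidNorm θ := by
  intro θ
  have hz : euclidNorm (0 : Fin p → ℝ) = 0 := by
    simp [euclidNorm]
  rw [Matrix.mulVec_zero, sub_zero, hz, mul_zero, add_zero]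
  rw [euclidNorm_sq, euclidNorm_sq]
  set v := X.mulVec θ with hv
  have expand : ∑ i, ((y - v) i) ^ 2
      = ∑ i, y i ^ 2 - 2 * ∑ i, y i * v i + ∑ i, v i ^ 2 := by
    simp only [Pi.sub_apply]
    rw [Finset.mul_sum, ← Finset.sum_sub_distrib, ← Finset.sum_add_distrib]
    apply Finset.sum_congr rfl
    intro i _
    ring
  have hswap : ∑ i, y i * v i = ∑ j, (Xᵀ.mulVec y) j * θ j := by
    simp only [hv, Matrix.mulVec, dotProduct, Matrix.transpose_apply,
      Finset.mul_sum, Finset.sum_mul]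
    rw [Finset.sum_comm]
    apply Finset.sum_congr rfl
    intro j _
    apply Finset.sum_congr rfl
    intro i _
    ring
  have hcs : ∑ j, (Xᵀ.mulVec y) j * θ j ≤ euclidNorm (Xᵀ.mulVec y) * euclidNorm θ :=
    sum_mul_le_euclidNorm_mul_euclidNorm _ _
  have hθ : 0 ≤ euclidNorm θ := euclidNorm_nonneg θ
  have hvsq : 0 ≤ ∑ i, v i ^ 2 := Finset.sum_nonneg fun i _ => sq_nonneg _
  have hbound : ∑ i, y i * v i ≤ μ / 2 * euclidNorm θ := by
    rw [hswap]
    calc ∑ j, (Xᵀ.mulVec y) j * θ j ≤ euclidNorm (Xᵀ.mulVec y) * euclidNorm θ := hcs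
      _ ≤ μ / 2 * euclidNorm θ := mul_le_mul_of_nonneg_right h hθ
  rw [expand]
  nlinarith
end

section
/- Let y ∈ ℝ^n, X ∈ ℝ^{n×p}, μ > 0, and f(θ) = ‖y − Xθ‖₂² + μ‖θ‖₂. If θ* ≠ 0 minimizes f, then θ* satisfies (XᵀX + (μ/(2‖θ*‖₂)) I) θ* = Xᵀy, and consequently ‖Xᵀy‖₂ > μ/2. -/
open Matrix

lemma euclidNorm_pos {ι : Type*} [Fintype ι] {v : ι → ℝ} (h : v ≠ 0) : 0 < euclidNorm v := by
  apply Real.sqrt_pos.2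
  obtain ⟨i, hi⟩ := Function.ne_iff.1 h
  rw [Pi.zero_apply] at hi
  have : (0:ℝ) < v i ^ 2 := by rcases hi.lt_or_gt with h | h <;> nlinarith
  exact this.trans_le (Finset.single_le_sum (fun j _ => sq_nonneg (v j)) (Finset.mem_univ i))

/-- A nonzero minimizer `θ*` of `‖y - Xθ‖₂² + μ‖θ‖₂` satisfies the normal equation
`(XᵀX + (μ/(2‖θ*‖₂)) I) θ* = Xᵀ y`, and consequently `‖Xᵀy‖₂ > μ/2`. -/
theorem nonzero_minimizer_normal_equation {n p : ℕ} (y : Fin n → ℝ)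
    (X : Matrix (Fin n) (Fin p) ℝ) (μ : ℝ) (hμ : 0 < μ)
    (θs : Fin p → ℝ) (hne : θs ≠ 0)
    (hmin : ∀ θ : Fin p → ℝ,
      euclidNorm (y - X.mulVec θs) ^ 2 + μ * euclidNorm θs ≤
        euclidNorm (y - X.mulVec θ) ^ 2 + μ * euclidNorm θ) :
    (Xᵀ * X).mulVec θs + (μ / (2 * euclidNorm θs)) • θs = Xᵀ.mulVec y ∧
      μ / 2 < euclidNorm (Xᵀ.mulVec y) := by
  have hθ : 0 < euclidNorm θs := euclidNorm_pos hne
  -- key directional derivative equation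
  have key : ∀ v : Fin p → ℝ,
      (∑ i, 2 * (y i - X.mulVec θs i) * (-(X.mulVec v i))) +
        μ * ((1 / (2 * euclidNorm θs)) * ∑ i, 2 * θs i * v i) = 0 := by
    intro v
    set a : Fin n → ℝ := fun i => y i - X.mulVec θs i with ha
    set b : Fin n → ℝ := fun i => X.mulVec v i with hb
    set g : ℝ → ℝ := fun t =>
      (∑ i, (a i - t * b i) ^ 2) + μ * Real.sqrt (∑ i, (θs i + t * v i) ^ 2) with hg
    have hq0 : (∑ i, (θs i + (0:ℝ) * v i) ^ 2) ≠ 0 := by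
      simp only [zero_mul, add_zero]
      have := euclidNorm_sq θs
      nlinarith [hθ]
    -- derivative of the first part
    have hA : HasDerivAt (fun t => ∑ i, (a i - t * b i) ^ 2)
        (∑ i, 2 * a i * (-(b i))) 0 := by
      apply HasDerivAt.fun_sum
      intro i _
      have h1 : HasDerivAt (fun t : ℝ => a i - t * b i) (-(b i)) 0 :=
        (hasDerivAt_mul_const (b i)).const_sub (a i)
      have := h1.fun_pow 2
      simpa using this
    -- derivative of the sqrt part
    have hq : HasDerivAt (fun t => ∑ i, (θs i + t * v i) ^ 2)
        (∑ i, 2 * θs i * v i) 0 := by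
      apply HasDerivAt.fun_sum
      intro i _
      have h1 : HasDerivAt (fun t : ℝ => θs i + t * v i) (v i) 0 :=
        (hasDerivAt_mul_const (v i)).const_add (θs i)
      have := h1.fun_pow 2
      simpa using this
    have hB : HasDerivAt (fun t => Real.sqrt (∑ i, (θs i + t * v i) ^ 2))
        ((1 / (2 * Real.sqrt (∑ i, (θs i + (0:ℝ) * v i) ^ 2))) * ∑ i, 2 * θs i * v i) 0 :=
      (Real.hasDerivAt_sqrt hq0).comp 0 hq
    have hsq0 : Real.sqrt (∑ i, (θs i + (0:ℝ) * v i) ^ 2) = euclidNorm θs := by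
      simp [euclidNorm]
    rw [hsq0] at hB
    have hg' : HasDerivAt g
        ((∑ i, 2 * a i * (-(b i))) + μ * ((1 / (2 * euclidNorm θs)) * ∑ i, 2 * θs i * v i)) 0 :=
      hA.add (hB.const_mul μ)
    -- g has a local min at 0
    have hgmin : IsLocalMin g 0 := by
      apply Filter.Eventually.of_forall
      intro t
      have hgt : ∀ s : ℝ, g s =
          euclidNorm (y - X.mulVec (θs + s • v)) ^ 2 + μ * euclidNorm (θs + s • v) := by
        intro s
        have h1 : (fun i => y i - X.mulVec (θs + s • v) i) = fun i => a i - s * b i := by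
          funext i
          simp [ha, hb, Matrix.mulVec_add, Matrix.mulVec_smul]
          ring
        have h2 : euclidNorm (y - X.mulVec (θs + s • v)) ^ 2 = ∑ i, (a i - s * b i) ^ 2 := by
          rw [euclidNorm_sq]
          exact Finset.sum_congr rfl fun i _ => by
            rw [Pi.sub_apply]; rw [show y i - X.mulVec (θs + s • v) i = a i - s * b i from
              congrFun h1 i]
        have h3 : euclidNorm (θs + s • v) = Real.sqrt (∑ i, (θs i + s * v i) ^ 2) := by
          simp [euclidNorm]
        rw [hg]
        simp only [h2, h3]
      rw [hgt t, hgt 0]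
      simp only [zero_smul, add_zero]
      exact hmin (θs + t • v)
    exact hgmin.hasDerivAt_eq_zero hg'
  constructor
  · -- normal equation, componentwise
    funext j
    have hv := key (Pi.single j (1:ℝ))
    have hmv : ∀ i, X.mulVec (Pi.single j 1) i = X i j := by
      intro i
      simp [Matrix.mulVec, dotProduct, Pi.single_apply, mul_ite]
    have hsp : (∑ i, 2 * θs i * (Pi.single j (1:ℝ) : Fin p → ℝ) i) = 2 * θs j := by
      rw [Finset.sum_eq_single j]
      · simp
      · intro i _ hij; simp [Pi.single_apply, hij]
      · simp
    rw [hsp] at hv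
    have hv' : (∑ i, 2 * (y i - X.mulVec θs i) * (-(X i j))) +
        μ * ((1 / (2 * euclidNorm θs)) * (2 * θs j)) = 0 := by
      rw [← hv]
      congr 1
      exact Finset.sum_congr rfl fun i _ => by rw [hmv i]
    have hexp : (∑ i, 2 * (y i - X.mulVec θs i) * (-(X i j))) =
        2 * (∑ i, X i j * X.mulVec θs i) - 2 * ∑ i, X i j * y i := by
      rw [Finset.mul_sum, Finset.mul_sum, ← Finset.sum_sub_distrib]
      exact Finset.sum_congr rfl fun i _ => by ring
    rw [hexp] at hv'
    have hXX : ((Xᵀ * X).mulVec θs) j = ∑ i, X i j * X.mulVec θs i := by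
      rw [← Matrix.mulVec_mulVec]
      simp [Matrix.mulVec, dotProduct, Matrix.transpose_apply]
    have hXy : (Xᵀ.mulVec y) j = ∑ i, X i j * y i := by
      simp [Matrix.mulVec, dotProduct, Matrix.transpose_apply]
    have hμθ : μ * ((1 / (2 * euclidNorm θs)) * (2 * θs j)) = 2 * ((μ / (2 * euclidNorm θs)) * θs j) := by
      field_simp
    rw [hμθ] at hv'
    simp only [Pi.add_apply, Pi.smul_apply, smul_eq_mul, hXX, hXy]
    linarith
  · -- the inequality
    have h0 := hmin 0
    have hy0 : euclidNorm (y - X.mulVec 0) = euclidNorm y := by simp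
    rw [hy0] at h0
    simp only [euclidNorm, Pi.zero_apply] at h0
    have h0' : euclidNorm (y - X.mulVec θs) ^ 2 + μ * euclidNorm θs ≤ euclidNorm y ^ 2 := by
      simpa [euclidNorm] using h0
    set w : Fin n → ℝ := X.mulVec θs with hw
    have hexp : euclidNorm (y - X.mulVec θs) ^ 2 =
        euclidNorm y ^ 2 - 2 * ∑ i, y i * w i + ∑ i, w i ^ 2 := by
      rw [euclidNorm_sq, euclidNorm_sq, Finset.mul_sum, ← Finset.sum_sub_distrib, ← Finset.sum_add_distrib]
      exact Finset.sum_congr rfl fun i _ => by simp [hw]; ring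
    rw [hexp] at h0'
    -- so 2 * ⟨y, w⟩ ≥ ∑ w² + μ‖θs‖
    have hkey : μ * euclidNorm θs + ∑ i, w i ^ 2 ≤ 2 * ∑ i, y i * w i := by linarith
    have hwpos : 0 < ∑ i, w i ^ 2 := by
      rcases (Finset.sum_nonneg fun i _ => sq_nonneg (w i)).lt_or_eq with h | h
      · exact h
      · exfalso
        have : ∀ i, w i = 0 := by
          intro i
          have := (Finset.sum_eq_zero_iff_of_nonneg fun i _ => sq_nonneg (w i)).1 h.symm
            i (Finset.mem_univ i)
          exact pow_eq_zero_iff (n := 2) (by norm_num) |>.1 this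
        have hz : (∑ i, y i * w i) = 0 := Finset.sum_eq_zero fun i _ => by rw [this i]; ring
        rw [hz, ← h] at hkey
        nlinarith [mul_pos hμ hθ]
    have hstrict : μ * euclidNorm θs < 2 * ∑ i, y i * w i := by linarith
    -- ⟨y, Xθs⟩ = ⟨Xᵀy, θs⟩
    have hswap : (∑ i, y i * w i) = ∑ j, Xᵀ.mulVec y j * θs j := by
      simp only [hw, Matrix.mulVec, dotProduct, Matrix.transpose_apply,
        Finset.mul_sum, Finset.sum_mul]
      rw [Finset.sum_comm]
      exact Finset.sum_congr rfl fun j _ => Finset.sum_congr rfl fun i _ => by ring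
    -- Cauchy-Schwarz
    have hcs : (∑ j, Xᵀ.mulVec y j * θs j) ≤ euclidNorm (Xᵀ.mulVec y) * euclidNorm θs := by
      simpa [euclidNorm] using Real.sum_mul_le_sqrt_mul_sqrt Finset.univ (Xᵀ.mulVec y) θs
    rw [hswap] at hstrict
    have : μ * euclidNorm θs < 2 * (euclidNorm (Xᵀ.mulVec y) * euclidNorm θs) := by linarith
    have h2 : μ < 2 * euclidNorm (Xᵀ.mulVec y) := by
      rcases lt_or_ge μ (2 * euclidNorm (Xᵀ.mulVec y)) with h | h
      · exact h
      · exfalso; nlinarith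
    linarith
end

section
/- Let A ∈ ℝ^{d₁×d₃}, B ∈ ℝ^{d₁×d₁} positive definite, C ∈ ℝ^{d₃×d₂}, and μ > 0. If ‖B^{1/2} A C‖_F ≤ μ/2, then X = 0 is a global minimizer of F(X) = ‖A − B X Cᵀ‖_F² + μ √(tr(Xᵀ B X)) over X ∈ ℝ^{d₁×d₂}. -/
open Matrix

open scoped ComplexOrder in
/-- The positive semidefinite square root of a positive semidefinite matrix
(the definition `Matrix.PosSemidef.sqrt` of the older Mathlib, since removed). -/
noncomputable def Matrix.PosSemidef.sqrt {n 𝕜 : Type*} [Fintype n] [DecidableEq n] [RCLike 𝕜]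
    {A : Matrix n n 𝕜} (hA : A.PosSemidef) : Matrix n n 𝕜 :=
  hA.1.eigenvectorUnitary.1 * diagonal ((↑) ∘ (√·) ∘ hA.1.eigenvalues) *
  (star hA.1.eigenvectorUnitary : Matrix n n 𝕜)

lemma trace_transpose_mul_eq' {m n : Type*} [Fintype m] [Fintype n]
    (P Q : Matrix m n ℝ) : (Pᵀ * Q).trace = ∑ i, ∑ j, P i j * Q i j := by
  simp only [Matrix.trace, Matrix.diag, Matrix.mul_apply, Matrix.transpose_apply]
  rw [Finset.sum_comm]

lemma trace_cs {m n : Type*} [Fintype m] [Fintype n] (P Q : Matrix m n ℝ) :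
    (Pᵀ * Q).trace ≤
      Real.sqrt (∑ i, ∑ j, (P i j) ^ 2) * Real.sqrt (∑ i, ∑ j, (Q i j) ^ 2) := by
  rw [trace_transpose_mul_eq']
  have hP : (0:ℝ) ≤ ∑ i, ∑ j, (P i j) ^ 2 :=
    Finset.sum_nonneg fun _ _ => Finset.sum_nonneg fun _ _ => sq_nonneg _
  have hcs := Finset.sum_mul_sq_le_sq_mul_sq Finset.univ
      (fun p : m × n => P p.1 p.2) (fun p : m × n => Q p.1 p.2)
  simp only [Fintype.sum_prod_type] at hcs
  calc ∑ i, ∑ j, P i j * Q i j ≤ |∑ i, ∑ j, P i j * Q i j| := le_abs_self _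
    _ = Real.sqrt ((∑ i, ∑ j, P i j * Q i j) ^ 2) := (Real.sqrt_sq_eq_abs _).symm
    _ ≤ Real.sqrt ((∑ i, ∑ j, (P i j) ^ 2) * ∑ i, ∑ j, (Q i j) ^ 2) :=
        Real.sqrt_le_sqrt hcs
    _ = _ := Real.sqrt_mul hP _

/-- If `‖B^{1/2} A C‖_F ≤ μ/2`, then `X = 0` globally minimizes
`‖A - B X Cᵀ‖_F² + μ √(tr(Xᵀ B X))`. -/
theorem zero_minimizes_canonical {d₁ d₂ d₃ : ℕ} (A : Matrix (Fin d₁) (Fin d₃) ℝ)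
    (B : Matrix (Fin d₁) (Fin d₁) ℝ) (hB : B.PosDef)
    (C : Matrix (Fin d₃) (Fin d₂) ℝ) (μ : ℝ) (hμ : 0 < μ)
    (h : frob (hB.posSemidef.sqrt * A * C) ≤ μ / 2) :
    ∀ X : Matrix (Fin d₁) (Fin d₂) ℝ,
      frob (A - B * (0 : Matrix (Fin d₁) (Fin d₂) ℝ) * Cᵀ) ^ 2 +
          μ * Real.sqrt (Matrix.trace ((0 : Matrix (Fin d₁) (Fin d₂) ℝ)ᵀ * B * (0 : Matrix (Fin d₁) (Fin d₂) ℝ))) ≤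
        frob (A - B * X * Cᵀ) ^ 2 + μ * Real.sqrt (Matrix.trace (Xᵀ * B * X)) := by
  intro X
  set S := hB.posSemidef.sqrt with hSdef
  have hSS : S * S = B := by
    have hU := (hB.posSemidef.1.eigenvectorUnitary).2
    rw [Matrix.mem_unitaryGroup_iff'] at hU
    conv_rhs => rw [hB.posSemidef.1.spectral_theorem]
    simp only [hSdef, Matrix.PosSemidef.sqrt, Unitary.conjStarAlgAut_apply]
    simp only [Matrix.mul_assoc]
    rw [← Matrix.mul_assoc _ _ (diagonal _ * _), hU, Matrix.one_mul, ← Matrix.mul_assoc (diagonal _), diagonal_mul_diagonal]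
    congr 3
    funext i
    simp only [Function.comp]
    exact_mod_cast Real.mul_self_sqrt (hB.posSemidef.eigenvalues_nonneg i)
  have hSt : Sᵀ = S := by
    simp only [hSdef, Matrix.PosSemidef.sqrt, Matrix.transpose_mul, diagonal_transpose, Matrix.mul_assoc]
    rw [star_eq_conjTranspose, conjTranspose_eq_transpose_of_trivial, transpose_transpose]
  -- squared frobenius norms
  have sqnn : ∀ {m n : Type} [Fintype m] [Fintype n] (M : Matrix m n ℝ),
      (0:ℝ) ≤ ∑ i, ∑ j, (M i j) ^ 2 := fun M =>
    Finset.sum_nonneg fun _ _ => Finset.sum_nonneg fun _ _ => sq_nonneg _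
  have frob_sq : ∀ {m n : Type} [Fintype m] [Fintype n] (M : Matrix m n ℝ),
      frob M ^ 2 = ∑ i, ∑ j, (M i j) ^ 2 := fun M => Real.sq_sqrt (sqnn M)
  -- left hand side simplification
  have hlhs : frob (A - B * (0 : Matrix (Fin d₁) (Fin d₂) ℝ) * Cᵀ) ^ 2 +
      μ * Real.sqrt (Matrix.trace ((0 : Matrix (Fin d₁) (Fin d₂) ℝ)ᵀ * B * (0 : Matrix (Fin d₁) (Fin d₂) ℝ))) =
      ∑ i, ∑ j, (A i j) ^ 2 := by
    rw [frob_sq]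
    simp
  rw [hlhs, frob_sq]
  -- expand the square
  set M := B * X * Cᵀ with hM
  have hexp : ∑ i, ∑ j, ((A - M) i j) ^ 2 =
      (∑ i, ∑ j, (A i j) ^ 2) - 2 * (∑ i, ∑ j, A i j * M i j) + ∑ i, ∑ j, (M i j) ^ 2 := by
    simp only [Matrix.sub_apply]
    rw [Finset.mul_sum, ← Finset.sum_sub_distrib, ← Finset.sum_add_distrib]
    refine Finset.sum_congr rfl fun i _ => ?_
    rw [Finset.mul_sum, ← Finset.sum_sub_distrib, ← Finset.sum_add_distrib]
    refine Finset.sum_congr rfl fun j _ => ?_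
    ring
  -- the cross term as a trace
  have hT : ∑ i, ∑ j, A i j * M i j = ((S * A * C)ᵀ * (S * X)).trace := by
    rw [← trace_transpose_mul_eq']
    have : Aᵀ * M = (Aᵀ * B * X) * Cᵀ := by rw [hM]; simp only [Matrix.mul_assoc]
    rw [this, Matrix.trace_mul_comm]
    congr 1
    rw [Matrix.transpose_mul, Matrix.transpose_mul, hSt, ← hSS]
    simp only [Matrix.mul_assoc]
  -- the regularizer trace
  have hreg : Matrix.trace (Xᵀ * B * X) = ∑ i, ∑ j, ((S * X) i j) ^ 2 := by
    have : Xᵀ * B * X = (S * X)ᵀ * (S * X) := by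
      rw [Matrix.transpose_mul, hSt, ← hSS]; simp only [Matrix.mul_assoc]
    rw [this, trace_transpose_mul_eq']
    congr 1; ext i; congr 1; ext j; ring
  rw [hexp, hreg]
  -- bound the cross term
  have hcs : ((S * A * C)ᵀ * (S * X)).trace ≤
      Real.sqrt (∑ i, ∑ j, ((S * A * C) i j) ^ 2) * Real.sqrt (∑ i, ∑ j, ((S * X) i j) ^ 2) :=
    trace_cs _ _
  have hPle : Real.sqrt (∑ i, ∑ j, ((S * A * C) i j) ^ 2) ≤ μ / 2 := h
  have hQnn : (0:ℝ) ≤ Real.sqrt (∑ i, ∑ j, ((S * X) i j) ^ 2) := Real.sqrt_nonneg _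
  have hMnn : (0:ℝ) ≤ ∑ i, ∑ j, (M i j) ^ 2 := sqnn M
  nlinarith [hT, mul_le_mul_of_nonneg_right hPle hQnn]
end
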